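/- Let f : ℝ → ℝ be continuously differentiable and let c be a real constant with c > f(0). Then there exist T > 0 and a differentiable solution (x, y) : [0, T] → ℝ² of the system x'(t) = y(t) − c, y'(t) = y(t) − f(x(t)) such that x(T) = 0, y(T) = f(0), and x(t) > 0 for all t ∈ [0, T). That is, a trajectory of the right-hand vector field reaches the pseudoequilibrium (0, f(0)) in finite forward time from the region x > 0, playing the role of a stable manifold. -/

import Mathlib

/-- Let `f` be C¹ and `c > f 0`.  Then there are `T > 0` and a differentiable
solution `(x, y) : [0, T] → ℝ²` of `x' = y − c`, `y' = y − f(x)` with `x T = 0`,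
`y T = f 0`, and `x t > 0` for all `t ∈ [0, T)`: a trajectory of the right-hand
vector field reaches the pseudoequilibrium `(0, f 0)` in finite forward time from
the region `x > 0`, playing the role of a stable manifold. -/
theorem trajectory_reaching_pseudoequilibrium
    (f : ℝ → ℝ) (hf : ContDiff ℝ 1 f) (c : ℝ) (hc : f 0 < c) :
    ∃ T > 0, ∃ x y : ℝ → ℝ,
      (∀ t ∈ Set.Icc 0 T, HasDerivWithinAt x (y t - c) (Set.Icc 0 T) t) ∧
      (∀ t ∈ Set.Icc 0 T, HasDerivWithinAt y (y t - f (x t)) (Set.Icc 0 T) t) ∧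
      x T = 0 ∧ y T = f 0 ∧
      (∀ t ∈ Set.Ico 0 T, 0 < x t) := by
  -- time-reversed vector field
  set v : ℝ × ℝ → ℝ × ℝ := fun p => (c - p.2, f p.1 - p.2) with hv
  have hvC : ContDiff ℝ 1 v := by
    apply ContDiff.prodMk
    · exact contDiff_const.sub contDiff_snd
    · exact (hf.comp contDiff_fst).sub contDiff_snd
  obtain ⟨α, hα0, ε, hε, hα⟩ :=
    ContDiffAt.exists_forall_mem_closedBall_exists_eq_forall_mem_Ioo_hasDerivAt₀ (x₀ := ((0:ℝ), f 0)) hvC.contDiffAt (0:ℝ)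
  -- continuity of the second component near 0 to get y < c on a small interval
  have h0mem : (0 : ℝ) ∈ Set.Ioo (0 - ε) (0 + ε) := by
    constructor <;> simp [hε]
  have hcont2 : ContinuousAt (fun s => (α s).2) 0 :=
    continuous_snd.continuousAt.comp (hα 0 h0mem).continuousAt
  have hev : ∀ᶠ s in nhds (0 : ℝ), (α s).2 < c := by
    have : (α 0).2 < c := by rw [hα0]; exact hc
    exact hcont2.eventually_lt continuousAt_const this
  obtain ⟨δ, hδ, hδ2⟩ := Metric.eventually_nhds_iff.1 hev
  set T : ℝ := min (ε / 2) (δ / 2) with hT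
  have hTpos : 0 < T := lt_min (by linarith) (by linarith)
  have hTsub : ∀ s ∈ Set.Icc (0 : ℝ) T, s ∈ Set.Ioo (0 - ε) (0 + ε) := by
    intro s hs
    have h1 : T ≤ ε / 2 := min_le_left _ _
    constructor <;> simp only [zero_sub, zero_add]
    · linarith [hs.1]
    · linarith [hs.2]
  have hylt : ∀ s ∈ Set.Icc (0 : ℝ) T, (α s).2 < c := by
    intro s hs
    apply hδ2
    have h2 : T ≤ δ / 2 := min_le_right _ _
    rw [Real.dist_eq, abs_lt]
    constructor <;> simp <;> linarith [hs.1, hs.2]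
  -- first component derivative
  have hα1 : ∀ s ∈ Set.Ioo (0 - ε) (0 + ε),
      HasDerivAt (fun s => (α s).1) (c - (α s).2) s := by
    intro s hs
    have := (ContinuousLinearMap.fst ℝ ℝ ℝ).hasFDerivAt.comp_hasDerivAt s (hα s hs)
    exact this
  -- strict monotonicity of the first component on [0, T]
  have hmono : StrictMonoOn (fun s => (α s).1) (Set.Icc 0 T) := by
    apply strictMonoOn_of_hasDerivWithinAt_pos (f' := fun s => c - (α s).2)
      (convex_Icc 0 T)
    · intro s hs
      exact (hα1 s (hTsub s hs)).continuousAt.continuousWithinAt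
    · intro s hs
      rw [interior_Icc] at hs
      exact (hα1 s (hTsub s (Set.Ioo_subset_Icc_self hs))).hasDerivWithinAt
    · intro s hs
      rw [interior_Icc] at hs
      have := hylt s (Set.Ioo_subset_Icc_self hs)
      linarith
  -- define the solution
  refine ⟨T, hTpos, fun t => (α (T - t)).1, fun t => (α (T - t)).2, ?_, ?_, ?_, ?_, ?_⟩
  · intro t ht
    have hmem : T - t ∈ Set.Icc (0 : ℝ) T := ⟨by linarith [ht.2], by linarith [ht.1]⟩
    have hd : HasDerivAt (fun t : ℝ => α (T - t))
        ((-1 : ℝ) • v (α (T - t))) t := by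
      have hin : HasDerivAt (fun t : ℝ => T - t) (-1) t := by
        simpa using (hasDerivAt_id t).const_sub T
      exact HasDerivAt.scomp t (hα (T - t) (hTsub _ hmem)) hin
    have hd1 := (ContinuousLinearMap.fst ℝ ℝ ℝ).hasFDerivAt.comp_hasDerivAt t hd
    have : HasDerivAt (fun t => (α (T - t)).1) ((α (T - t)).2 - c) t := by
      refine hd1.congr_deriv ?_
      simp [hv]
    exact this.hasDerivWithinAt
  · intro t ht
    have hmem : T - t ∈ Set.Icc (0 : ℝ) T := ⟨by linarith [ht.2], by linarith [ht.1]⟩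
    have hd : HasDerivAt (fun t : ℝ => α (T - t))
        ((-1 : ℝ) • v (α (T - t))) t := by
      have hin : HasDerivAt (fun t : ℝ => T - t) (-1) t := by
        simpa using (hasDerivAt_id t).const_sub T
      exact HasDerivAt.scomp t (hα (T - t) (hTsub _ hmem)) hin
    have hd2 := (ContinuousLinearMap.snd ℝ ℝ ℝ).hasFDerivAt.comp_hasDerivAt t hd
    have : HasDerivAt (fun t => (α (T - t)).2)
        ((α (T - t)).2 - f ((α (T - t)).1)) t := by
      refine hd2.congr_deriv ?_
      simp [hv]
    exact this.hasDerivWithinAt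
  · simp [hα0]
  · simp [hα0]
  · intro t ht
    have h1 : T - t ∈ Set.Icc (0 : ℝ) T := ⟨by linarith [ht.2], by linarith [ht.1]⟩
    have h0 : (0 : ℝ) ∈ Set.Icc (0 : ℝ) T := ⟨le_refl _, le_of_lt hTpos⟩
    have := hmono h0 h1 (by linarith [ht.1, ht.2])
    simpa [hα0] using this
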